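/- Let T be a finite tree with at least 2 vertices in which any two distinct leaves are at distance at least k (spread at least k). Then the vertex set of T can be partitioned into vertex-disjoint paths, each containing at least k/2 vertices. -/

import Mathlib

set_option linter.unusedSectionVars false
open SimpleGraph Finset

section Prelim
variable {V : Type*} [DecidableEq V] {T : SimpleGraph V}

lemma path_unique (hT : T.IsTree) {x y : V} (p q : T.Walk x y) (hp : p.IsPath) (hq : q.IsPath) :
    p = q :=
  congrArg Subtype.val ((SimpleGraph.isAcyclic_iff_path_unique.mp hT.2) ⟨p, hp⟩ ⟨q, hq⟩)

lemma path_length (hT : T.IsTree) {x y : V} (p : T.Walk x y) (hp : p.IsPath) :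
    p.length = T.dist x y := by
  obtain ⟨q, hq, hql⟩ := hT.1.exists_path_of_dist x y
  rw [path_unique hT p q hp hq, hql]

/-- On a path from s0 to y realizing distance (all tree paths do), a support vertex x
has dist s0 x ≤ dist s0 y, with equality iff x = y. -/
lemma dist_on_path_lt (hT : T.IsTree) {s0 y x : V} (p : T.Walk s0 y) (hp : p.IsPath)
    (hx : x ∈ p.support) (hxy : x ≠ y) : T.dist s0 x < T.dist s0 y := by
  have h1 : T.dist s0 x ≤ (p.takeUntil x hx).length := SimpleGraph.dist_le _
  have h2 := congrArg SimpleGraph.Walk.length (p.take_spec hx)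
  rw [SimpleGraph.Walk.length_append] at h2
  have h3 : (p.dropUntil x hx).length ≠ 0 := by
    intro h0
    exact hxy (SimpleGraph.Walk.eq_of_length_eq_zero h0)
  have := path_length hT p hp
  omega

set_option linter.unusedSectionVars false

lemma isPath_concat {x y z : V} (p : T.Walk x y) (hp : p.IsPath) (h : T.Adj y z)
    (hz : z ∉ p.support) : (p.concat h).IsPath := by
  rw [← SimpleGraph.Walk.isPath_reverse_iff, SimpleGraph.Walk.reverse_concat]
  exact SimpleGraph.Walk.IsPath.cons hp.reverse (by
    rwa [SimpleGraph.Walk.support_reverse, List.mem_reverse])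

lemma nbr_dist_ne (hT : T.IsTree) {s0 x y : V} (hadj : T.Adj x y) :
    T.dist s0 y ≠ T.dist s0 x := by
  intro heq
  obtain ⟨p, hp, hpl⟩ := hT.1.exists_path_of_dist s0 y
  by_cases hx : x ∈ p.support
  · have hxy : x ≠ y := hadj.ne
    have := dist_on_path_lt hT p hp hx hxy
    omega
  · have hq : (p.concat hadj.symm).IsPath := isPath_concat p hp hadj.symm hx
    have := path_length hT _ hq
    rw [SimpleGraph.Walk.length_concat] at this
    omega

lemma nbr_dist_cases (hT : T.IsTree) {s0 x y : V} (hadj : T.Adj x y) :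
    T.dist s0 y = T.dist s0 x + 1 ∨ T.dist s0 y + 1 = T.dist s0 x := by
  have h1 : T.dist s0 y ≤ T.dist s0 x + T.dist x y := hT.1.dist_triangle
  have h2 : T.dist s0 x ≤ T.dist s0 y + T.dist y x := hT.1.dist_triangle
  have hxy : T.dist x y = 1 := SimpleGraph.dist_eq_one_iff_adj.mpr hadj
  have hyx : T.dist y x = 1 := SimpleGraph.dist_eq_one_iff_adj.mpr hadj.symm
  have := nbr_dist_ne hT (s0 := s0) hadj
  omega

lemma unique_down_nbr (hT : T.IsTree) {s0 x y y' : V} (h1 : T.Adj x y) (h2 : T.Adj x y')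
    (hd : T.dist s0 y + 1 = T.dist s0 x) (hd' : T.dist s0 y' + 1 = T.dist s0 x) : y = y' := by
  obtain ⟨p, hp, hpl⟩ := hT.1.exists_path_of_dist s0 y
  obtain ⟨p', hp', hpl'⟩ := hT.1.exists_path_of_dist s0 y'
  have hx : x ∉ p.support := by
    intro hx
    rcases eq_or_ne x y with rfl | hxy
    · exact h1.ne rfl
    · have := dist_on_path_lt hT p hp hx hxy; omega
  have hx' : x ∉ p'.support := by
    intro hx'
    rcases eq_or_ne x y' with rfl | hxy
    · exact h2.ne rfl
    · have := dist_on_path_lt hT p' hp' hx' hxy; omega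
  have hq : (p.concat h1.symm).IsPath := isPath_concat p hp h1.symm hx
  have hq' : (p'.concat h2.symm).IsPath := isPath_concat p' hp' h2.symm hx'
  have heq := path_unique hT _ _ hq hq'
  have hs := congrArg SimpleGraph.Walk.support (congrArg SimpleGraph.Walk.reverse heq)
  rw [SimpleGraph.Walk.reverse_concat, SimpleGraph.Walk.reverse_concat,
    SimpleGraph.Walk.support_cons, SimpleGraph.Walk.support_cons,
    p.reverse.support_eq_cons, p'.reverse.support_eq_cons] at hs
  exact (List.cons.injEq _ _ _ _).mp ((List.cons.injEq _ _ _ _).mp hs).2 |>.1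

variable [DecidableRel T.Adj]

/-- Degree of `x` within vertex set `S`. -/
def degIn (T : SimpleGraph V) [DecidableRel T.Adj] (S : Finset V) (x : V) : ℕ :=
  (S.filter (T.Adj x)).card

/-- A vertex subset is convex: all (unique) paths between its vertices stay inside. -/
def TConvex (T : SimpleGraph V) (S : Finset V) : Prop :=
  ∀ x ∈ S, ∀ y ∈ S, ∀ p : T.Walk x y, p.IsPath → ∀ z ∈ p.support, z ∈ S

lemma cons_second_eq {x u y z : V} (h1 : T.Adj x y) (h2 : T.Adj x z) (t1 : T.Walk y u)
    (t2 : T.Walk z u) (heq : SimpleGraph.Walk.cons h1 t1 = SimpleGraph.Walk.cons h2 t2) :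
    y = z := by
  have hs := congrArg SimpleGraph.Walk.support heq
  rw [SimpleGraph.Walk.support_cons, SimpleGraph.Walk.support_cons, t1.support_eq_cons,
    t2.support_eq_cons] at hs
  exact ((List.cons.injEq _ _ _ _).mp ((List.cons.injEq _ _ _ _).mp hs).2).1

lemma two_supp_nbrs {u w : V} (p : T.Walk u w) (hp : p.IsPath) {z : V} (hz : z ∈ p.support)
    (hzu : z ≠ u) (hzw : z ≠ w) :
    ∃ a b, a ∈ p.support ∧ b ∈ p.support ∧ a ≠ b ∧ T.Adj z a ∧ T.Adj z b := by
  induction p with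
  | nil => rw [SimpleGraph.Walk.support_nil, List.mem_singleton] at hz; exact absurd hz hzu
  | @cons u x1 w h q ih =>
    rw [SimpleGraph.Walk.support_cons, List.mem_cons] at hz
    rcases hz with rfl | hz
    · exact absurd rfl hzu
    rcases eq_or_ne z x1 with rfl | hzx
    · cases q with
      | nil => exact absurd rfl hzw
      | @cons _ x2 _ h2 q2 =>
        refine ⟨u, x2, ?_, ?_, ?_, h.symm, h2⟩
        · simp
        · simp [SimpleGraph.Walk.support_cons]
        · rintro rfl
          rw [SimpleGraph.Walk.cons_isPath_iff] at hp
          exact hp.2 (by simp)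
    · obtain ⟨a, b, ha, hb, hab, h1, h2⟩ :=
        ih (hp.of_cons) hz hzx hzw
      exact ⟨a, b, by simp [ha], by simp [hb], hab, h1, h2⟩

/-- A "bare" path: starts at a leaf of `S`, stays in `S`, all internal vertices (incl. the
first) have degree 2 in `S`. -/
structure BareW (T : SimpleGraph V) [DecidableRel T.Adj] (S : Finset V) {u w : V}
    (p : T.Walk u w) : Prop where
  path : p.IsPath
  supp : ∀ z ∈ p.support, z ∈ S
  len : 1 ≤ p.length
  degu : degIn T S u = 1
  internal : ∀ z ∈ p.support, z ≠ u → z ≠ w → degIn T S z = 2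

lemma deg1_unique_nbr {S : Finset V} {u x1 : V} (hdeg : degIn T S u = 1) (hx1 : x1 ∈ S)
    (hadj : T.Adj u x1) : ∀ y ∈ S, T.Adj u y → y = x1 := by
  intro y hy hyadj
  have h1 : x1 ∈ S.filter (T.Adj u) := Finset.mem_filter.mpr ⟨hx1, hadj⟩
  have h2 : y ∈ S.filter (T.Adj u) := Finset.mem_filter.mpr ⟨hy, hyadj⟩
  exact Finset.card_le_one.mp (le_of_eq hdeg) _ h2 _ h1

lemma deg2_pair_nbrs {S : Finset V} {z a b : V} (hdeg : degIn T S z = 2) (ha : a ∈ S)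
    (hb : b ∈ S) (hadja : T.Adj z a) (hadjb : T.Adj z b) (hab : a ≠ b) :
    ∀ y ∈ S, T.Adj z y → y = a ∨ y = b := by
  intro y hy hyadj
  have hsub : ({a, b} : Finset V) ⊆ S.filter (T.Adj z) := by
    intro t ht
    rw [Finset.mem_insert, Finset.mem_singleton] at ht
    rcases ht with rfl | rfl
    · exact Finset.mem_filter.mpr ⟨ha, hadja⟩
    · exact Finset.mem_filter.mpr ⟨hb, hadjb⟩
  have hcard : ({a, b} : Finset V).card = 2 := Finset.card_pair hab
  have heq : ({a, b} : Finset V) = S.filter (T.Adj z) :=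
    Finset.eq_of_subset_of_card_le hsub (by rw [hcard]; exact le_of_eq hdeg)
  have : y ∈ ({a, b} : Finset V) := heq ▸ Finset.mem_filter.mpr ⟨hy, hyadj⟩
  rw [Finset.mem_insert, Finset.mem_singleton] at this
  exact this

lemma exists_concat {u w : V} (p : T.Walk u w) (hl : 1 ≤ p.length) :
    ∃ (c : V) (q : T.Walk u c) (h : T.Adj c w), p = q.concat h := by
  cases p with
  | nil => simp at hl
  | cons h p' => exact SimpleGraph.Walk.exists_cons_eq_concat h p'

lemma bare_closure {S : Finset V} {u w : V} {p : T.Walk u w} (hB : BareW T S p) :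
    ∀ z ∈ p.support, z ≠ w → ∀ y ∈ S, T.Adj z y → y ∈ p.support := by
  intro z hz hzw y hy hadj
  rcases eq_or_ne z u with rfl | hzu
  · -- z = u : unique neighbour is the second vertex
    set x1 := p.getVert 1 with hx1def
    have hadj1 : T.Adj z x1 := by
      have := p.adj_getVert_succ (i := 0) (by have := hB.len; omega)
      rwa [p.getVert_zero] at this
    have hx1 : x1 ∈ p.support :=
      SimpleGraph.Walk.mem_support_iff_exists_getVert.mpr ⟨1, rfl, by have := hB.len; omega⟩
    have := deg1_unique_nbr hB.degu (hB.supp _ hx1) hadj1 y hy hadj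
    rw [this]; exact hx1
  · obtain ⟨a, b, ha, hb, hab, h1, h2⟩ := two_supp_nbrs p hB.path hz hzu hzw
    have hdeg := hB.internal z hz hzu hzw
    rcases deg2_pair_nbrs hdeg (hB.supp _ ha) (hB.supp _ hb) h1 h2 hab y hy hadj with rfl | rfl
    · exact ha
    · exact hb

lemma walk_confined {S C : Finset V} (hclosed : ∀ a ∈ C, ∀ b ∈ S, T.Adj a b → b ∈ C)
    {a z : V} (q : T.Walk a z) (ha : a ∈ C) (hsupp : ∀ v ∈ q.support, v ∈ S) : z ∈ C := by
  induction q with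
  | nil => exact ha
  | @cons a a2 z h q ih =>
    exact ih (hclosed a ha a2 (hsupp _ (by simp [SimpleGraph.Walk.support_cons])) h)
      (fun v hv => hsupp v (by simp [SimpleGraph.Walk.support_cons, hv]))

lemma walk_exit {S C : Finset V} {w0 : V}
    (hclosed : ∀ a ∈ C, ∀ y ∈ S, T.Adj a y → y ∈ C ∨ y = w0) :
    ∀ {a z : V} (q : T.Walk a z), a ∈ C → z ∉ C → (∀ v ∈ q.support, v ∈ S) →
      w0 ∈ q.support.tail := by
  intro a z q
  induction q with
  | nil => intro ha hz _; exact absurd ha hz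
  | @cons a a2 z h q ih =>
    intro ha hz hsupp
    have ha2S : a2 ∈ S := hsupp _ (by simp [SimpleGraph.Walk.support_cons])
    rcases hclosed a ha a2 ha2S h with h2 | rfl
    · have := ih h2 hz (fun v hv => hsupp v (by simp [SimpleGraph.Walk.support_cons, hv]))
      rw [SimpleGraph.Walk.support_cons]
      exact List.mem_of_mem_tail this
    · rw [SimpleGraph.Walk.support_cons]
      exact q.start_mem_support

lemma walk_exit' {S C : Finset V} {w0 : V}
    (hcl : ∀ c ∈ C, c ≠ w0 → ∀ y ∈ S, T.Adj c y → y ∈ C) :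
    ∀ {a z : V} (q : T.Walk a z), a ∈ C → z ∉ C → (∀ v ∈ q.support, v ∈ S) →
      w0 ∈ q.support := by
  intro a z q
  induction q with
  | nil => intro ha hz _; exact absurd ha hz
  | @cons a a2 z h q ih =>
    intro ha hz hsupp
    rcases eq_or_ne a w0 with rfl | haw
    · simp [SimpleGraph.Walk.support_cons]
    · have ha2S : a2 ∈ S := hsupp _ (by simp [SimpleGraph.Walk.support_cons])
      have h2 : a2 ∈ C := hcl a ha haw a2 ha2S h
      have := ih h2 hz (fun v hv => hsupp v (by simp [SimpleGraph.Walk.support_cons, hv]))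
      simp [SimpleGraph.Walk.support_cons, this]

lemma path_length_lt_card {S : Finset V} {u w : V} {p : T.Walk u w} (hpath : p.IsPath)
    (hsub : ∀ z ∈ p.support, z ∈ S) : p.length < S.card := by
  have hnd := hpath.support_nodup
  have h1 : p.support.toFinset.card ≤ S.card :=
    Finset.card_le_card (fun t ht => hsub t (List.mem_toFinset.mp ht))
  rw [List.toFinset_card_of_nodup hnd, SimpleGraph.Walk.length_support] at h1
  omega

lemma bare_end_ne_start {S : Finset V} {u a : V} {p : T.Walk u a} (hB : BareW T S p) :
    a ≠ u := by
  rintro rfl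
  have := SimpleGraph.Walk.isPath_iff_eq_nil.mp hB.path
  subst this
  exact absurd hB.len (by simp)

/-- Determinism of complete bare walks starting at a common leaf. -/
lemma bare_unique {S : Finset V} {u a b : V} {p : T.Walk u a} {q : T.Walk u b}
    (hp : BareW T S p) (hpa : degIn T S a ≠ 2) (hq : BareW T S q)
    (hqb : degIn T S b ≠ 2) : b = a := by
  have hau : a ≠ u := bare_end_ne_start hp
  have hbu : b ≠ u := bare_end_ne_start hq
  by_cases hbp : b ∈ p.support
  · by_contra hba
    exact hqb (hp.internal b hbp hbu hba)
  · exfalso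
    have hcl : ∀ c ∈ p.support.toFinset, c ≠ a → ∀ y ∈ S, T.Adj c y → y ∈ p.support.toFinset := by
      intro c hc hca y hy hadj
      exact List.mem_toFinset.mpr
        (bare_closure hp c (List.mem_toFinset.mp hc) hca y hy hadj)
    have hstart : u ∈ p.support.toFinset := List.mem_toFinset.mpr p.start_mem_support
    have hend : b ∉ p.support.toFinset := fun hh => hbp (List.mem_toFinset.mp hh)
    have haq : a ∈ q.support := walk_exit' hcl q hstart hend hq.supp
    rcases eq_or_ne a b with rfl | hab
    · exact hbp p.end_mem_support
    · exact hpa (hq.internal a haq hau hab)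

lemma bare_step (hT : T.IsTree) {S : Finset V} {u x : V} (p : T.Walk u x) (hB : BareW T S p)
    (hdx : degIn T S x = 2) :
    ∃ (y : V) (hadj : T.Adj x y), y ∉ p.support ∧ BareW T S (p.concat hadj) := by
  obtain ⟨c, q0, h, hpe⟩ := exists_concat p hB.len
  have hcsupp : c ∈ p.support := by
    rw [hpe, SimpleGraph.Walk.support_concat]
    exact List.mem_append.mpr (Or.inl q0.end_mem_support)
  have hcfil : c ∈ S.filter (T.Adj x) :=
    Finset.mem_filter.mpr ⟨hB.supp _ hcsupp, h.symm⟩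
  have herase : ((S.filter (T.Adj x)).erase c).Nonempty := by
    rw [← Finset.card_pos, Finset.card_erase_of_mem hcfil]
    rw [degIn] at hdx
    omega
  obtain ⟨y, hy⟩ := herase
  have hyc : y ≠ c := Finset.ne_of_mem_erase hy
  have hyfil := Finset.mem_of_mem_erase hy
  have hyS : y ∈ S := (Finset.mem_filter.mp hyfil).1
  have hadj : T.Adj x y := (Finset.mem_filter.mp hyfil).2
  have hynotsupp : y ∉ p.support := by
    intro hy'
    have hyx : y ≠ x := fun hh => T.irrefl (hh ▸ hadj)
    have hr : (p.dropUntil y hy').IsPath := hB.path.dropUntil hy'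
    have hsingle : (SimpleGraph.Walk.cons hadj.symm SimpleGraph.Walk.nil : T.Walk y x).IsPath :=
      (SimpleGraph.Path.singleton hadj.symm).2
    have hrs := path_unique hT _ _ hr hsingle
    have hspec := p.take_spec hy'
    rw [hrs] at hspec
    have : (p.takeUntil y hy').concat hadj.symm = p := by
      rw [SimpleGraph.Walk.concat_eq_append]; exact hspec
    obtain ⟨hv, -⟩ := SimpleGraph.Walk.concat_inj (this.trans hpe)
    exact hyc hv
  refine ⟨y, hadj, hynotsupp, ?_⟩
  have hpath' := isPath_concat p hB.path hadj hynotsupp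
  refine ⟨hpath', ?_, ?_, hB.degu, ?_⟩
  · intro z hz
    rw [SimpleGraph.Walk.support_concat, List.mem_append] at hz
    rcases hz with hz | hz
    · exact hB.supp _ hz
    · rw [List.mem_singleton] at hz; exact hz ▸ hyS
  · rw [SimpleGraph.Walk.length_concat]; omega
  · intro z hz hzu hzy
    rw [SimpleGraph.Walk.support_concat, List.mem_append] at hz
    rcases hz with hz | hz
    · rcases eq_or_ne z x with rfl | hzx
      · exact hdx
      · exact hB.internal z hz hzu hzx
    · rw [List.mem_singleton] at hz; exact absurd hz hzy

lemma bare_complete (hT : T.IsTree) {S : Finset V} :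
    ∀ (n : ℕ) {u x : V} (p : T.Walk u x), BareW T S p → S.card ≤ n + p.length →
    ∃ (w : V) (q : T.Walk u w), BareW T S q ∧ degIn T S w ≠ 2 := by
  intro n
  induction n with
  | zero =>
    intro u x p hB hcard
    exact absurd (path_length_lt_card hB.path hB.supp) (by omega)
  | succ n ih =>
    intro u x p hB hcard
    by_cases hdx : degIn T S x = 2
    · obtain ⟨y, hadj, hnot, hB'⟩ := bare_step hT p hB hdx
      exact ih (p.concat hadj) hB' (by rw [SimpleGraph.Walk.length_concat]; omega)
    · exact ⟨x, p, hB, hdx⟩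

lemma exists_complete_from_leaf (hT : T.IsTree) {S : Finset V} {u : V} (hu : u ∈ S)
    (hdeg : degIn T S u = 1) :
    ∃ (w : V) (q : T.Walk u w), BareW T S q ∧ degIn T S w ≠ 2 := by
  have hfil : (S.filter (T.Adj u)).Nonempty := by
    rw [← Finset.card_pos]; rw [degIn] at hdeg; omega
  obtain ⟨x1, hx1⟩ := hfil
  have hx1S : x1 ∈ S := (Finset.mem_filter.mp hx1).1
  have hadj : T.Adj u x1 := (Finset.mem_filter.mp hx1).2
  have hB : BareW T S (SimpleGraph.Walk.cons hadj SimpleGraph.Walk.nil) := by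
    refine ⟨(SimpleGraph.Path.singleton hadj).2, ?_, by simp, hdeg, ?_⟩
    · intro z hz
      rw [SimpleGraph.Walk.support_cons, SimpleGraph.Walk.support_nil] at hz
      simp only [List.mem_cons, List.mem_singleton, List.not_mem_nil, or_false] at hz
      rcases hz with rfl | rfl
      · exact hu
      · exact hx1S
    · intro z hz hzu hzx
      rw [SimpleGraph.Walk.support_cons, SimpleGraph.Walk.support_nil] at hz
      simp only [List.mem_cons, List.mem_singleton, List.not_mem_nil, or_false] at hz
      rcases hz with rfl | rfl
      · exact absurd rfl hzu
      · exact absurd rfl hzx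
  exact bare_complete hT S.card _ hB (by simp)

lemma dist_lt_card (hT : T.IsTree) {S : Finset V} (hconv : TConvex T S) {x y : V}
    (hx : x ∈ S) (hy : y ∈ S) : T.dist x y < S.card := by
  obtain ⟨p, hp, hpl⟩ := hT.1.exists_path_of_dist x y
  have := path_length_lt_card hp (hconv x hx y hy p hp)
  omega

lemma exists_leaf (hT : T.IsTree) {S : Finset V} (hconv : TConvex T S) (hcard : 2 ≤ S.card) :
    ∃ u ∈ S, degIn T S u = 1 := by
  obtain ⟨s0, hs0⟩ := Finset.card_pos.mp (by omega : 0 < S.card)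
  obtain ⟨x, hx, hmax⟩ := S.exists_max_image (fun v => T.dist s0 v) ⟨s0, hs0⟩
  obtain ⟨y, hyS, hys0⟩ := Finset.exists_mem_ne (show 1 < S.card by omega) s0
  have hdy : 0 < T.dist s0 y := hT.1.pos_dist_of_ne (Ne.symm hys0)
  have hd : 0 < T.dist s0 x := lt_of_lt_of_le hdy (hmax y hyS)
  have hxs0 : x ≠ s0 := by rintro rfl; rw [SimpleGraph.dist_self] at hd; omega
  obtain ⟨p, hp, hpl⟩ := hT.1.exists_path_of_dist s0 x
  have hsupp : ∀ z ∈ p.support, z ∈ S := hconv s0 hs0 x hx p hp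
  obtain ⟨c, q0, h, hpe⟩ := exists_concat p (by omega)
  have hcsupp : c ∈ p.support := by
    rw [hpe, SimpleGraph.Walk.support_concat]
    exact List.mem_append.mpr (Or.inl q0.end_mem_support)
  have hcS : c ∈ S := hsupp _ hcsupp
  have hcx : c ≠ x := h.ne
  have hclt : T.dist s0 c < T.dist s0 x := dist_on_path_lt hT p hp hcsupp hcx
  have hcdist : T.dist s0 c + 1 = T.dist s0 x := by
    rcases nbr_dist_cases hT (s0 := s0) h.symm with h1 | h1 <;> omega
  refine ⟨x, hx, ?_⟩
  have : S.filter (T.Adj x) = {c} := by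
    apply Finset.eq_singleton_iff_unique_mem.mpr
    refine ⟨Finset.mem_filter.mpr ⟨hcS, h.symm⟩, ?_⟩
    intro y' hy'
    have hy'S := (Finset.mem_filter.mp hy').1
    have hy'adj := (Finset.mem_filter.mp hy').2
    rcases nbr_dist_cases hT (s0 := s0) hy'adj with h1 | h1
    · have := hmax y' hy'S; omega
    · exact unique_down_nbr hT hy'adj h.symm h1 hcdist
  rw [degIn, this, Finset.card_singleton]

lemma descend (hT : T.IsTree) {S : Finset V} (hconv : TConvex T S) {s0 : V} (hs0 : s0 ∈ S)
    {D : ℕ} (hdeg3 : ∀ z ∈ S, 3 ≤ degIn T S z → T.dist s0 z ≤ D) :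
    ∀ (n : ℕ) (x prev : V), x ∈ S → prev ∈ S → T.Adj x prev →
      T.dist s0 prev + 1 = T.dist s0 x → D < T.dist s0 x → S.card ≤ n + T.dist s0 x →
    ∃ (v : V) (q : T.Walk x v), q.IsPath ∧ (∀ z ∈ q.support, z ∈ S) ∧ prev ∉ q.support ∧
      degIn T S v = 1 ∧ (∀ z ∈ q.support, z ≠ v → degIn T S z = 2) ∧
      (∀ z ∈ q.support, T.dist s0 x ≤ T.dist s0 z) := by
  intro n
  induction n with
  | zero =>
    intro x prev hx _ _ _ _ hcard
    exact absurd (dist_lt_card hT hconv hs0 hx) (by omega)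
  | succ n ih =>
    intro x prev hx hprev hadj hdprev hD hcard
    have hdegx : degIn T S x ≤ 2 := by
      by_contra hh
      exact absurd (hdeg3 x hx (by omega)) (by omega)
    have hprevfil : prev ∈ S.filter (T.Adj x) := Finset.mem_filter.mpr ⟨hprev, hadj⟩
    have hdegx1 : 1 ≤ degIn T S x := Finset.card_pos.mpr ⟨prev, hprevfil⟩
    rcases Nat.lt_or_ge (degIn T S x) 2 with hdeg | hdeg
    · -- degree 1 : x is a leaf
      refine ⟨x, SimpleGraph.Walk.nil, by simp, ?_, ?_, by omega, ?_, ?_⟩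
      · intro z hz; rw [SimpleGraph.Walk.support_nil, List.mem_singleton] at hz
        exact hz ▸ hx
      · rw [SimpleGraph.Walk.support_nil, List.mem_singleton]
        exact hadj.ne'
      · intro z hz hzv
        rw [SimpleGraph.Walk.support_nil, List.mem_singleton] at hz
        exact absurd hz hzv
      · intro z hz
        rw [SimpleGraph.Walk.support_nil, List.mem_singleton] at hz
        exact hz ▸ le_refl _
    · have hdeg2 : degIn T S x = 2 := le_antisymm hdegx hdeg
      have herase : ((S.filter (T.Adj x)).erase prev).Nonempty := by
        rw [← Finset.card_pos, Finset.card_erase_of_mem hprevfil]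
        have h2 : (S.filter (T.Adj x)).card = 2 := hdeg2
        omega
      obtain ⟨y, hy⟩ := herase
      have hyprev : y ≠ prev := Finset.ne_of_mem_erase hy
      have hyfil := Finset.mem_of_mem_erase hy
      have hyS : y ∈ S := (Finset.mem_filter.mp hyfil).1
      have hyadj : T.Adj x y := (Finset.mem_filter.mp hyfil).2
      have hydist : T.dist s0 y = T.dist s0 x + 1 := by
        rcases nbr_dist_cases hT (s0 := s0) hyadj with h1 | h1
        · exact h1
        · exact absurd (unique_down_nbr hT hyadj hadj h1 hdprev) hyprev
      obtain ⟨v, q, hq1, hq2, hq3, hq4, hq5, hq6⟩ :=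
        ih y x hyS hx hyadj.symm (by omega) (by omega) (by omega)
      refine ⟨v, SimpleGraph.Walk.cons hyadj q, ?_, ?_, ?_, hq4, ?_, ?_⟩
      · exact SimpleGraph.Walk.IsPath.cons hq1 hq3
      · intro z hz
        rw [SimpleGraph.Walk.support_cons, List.mem_cons] at hz
        rcases hz with rfl | hz
        · exact hx
        · exact hq2 z hz
      · rw [SimpleGraph.Walk.support_cons, List.mem_cons]
        rintro (rfl | hmem)
        · exact T.irrefl hadj
        · have := hq6 _ hmem; omega
      · intro z hz hzv
        rw [SimpleGraph.Walk.support_cons, List.mem_cons] at hz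
        rcases hz with rfl | hz
        · exact hdeg2
        · exact hq5 z hz hzv
      · intro z hz
        rw [SimpleGraph.Walk.support_cons, List.mem_cons] at hz
        rcases hz with rfl | hz
        · exact le_refl _
        · have := hq6 z hz; omega

lemma main_partition (hT : T.IsTree) (k : ℕ) :
    ∀ (n : ℕ) (S : Finset V), S.card ≤ n → 2 ≤ S.card → TConvex T S →
    (∀ x ∈ S, ∀ y ∈ S, degIn T S x = 1 → degIn T S y = 1 → x ≠ y → k ≤ T.dist x y) →
    ∃ L : List ((a : V) × (b : V) × T.Walk a b),
      (∀ e ∈ L, e.2.2.IsPath) ∧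
      (∀ e ∈ L, k ≤ 2 * e.2.2.support.length) ∧
      (∀ v ∈ S, ∃ e ∈ L, v ∈ e.2.2.support) ∧
      (∀ e ∈ L, ∀ v ∈ e.2.2.support, v ∈ S) ∧
      L.Pairwise (fun e f => ∀ v, v ∈ e.2.2.support → v ∉ f.2.2.support) := by
  intro n
  induction n with
  | zero => intro S hSn hS2 _ _; omega
  | succ n ih =>
    intro S hSn hS2 hconv hspread
    by_cases hbr : ∃ z ∈ S, 3 ≤ degIn T S z
    · -- branch case
      obtain ⟨z0, hz0S, hz0deg⟩ := hbr
      set Q := S.filter (fun z => 3 ≤ degIn T S z) with hQdef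
      obtain ⟨wst, hwstQ, hmaxQ⟩ := Q.exists_max_image (fun z => T.dist z0 z)
        ⟨z0, Finset.mem_filter.mpr ⟨hz0S, hz0deg⟩⟩
      have hwstS : wst ∈ S := (Finset.mem_filter.mp hwstQ).1
      have hwstdeg : 3 ≤ degIn T S wst := (Finset.mem_filter.mp hwstQ).2
      set D := T.dist z0 wst with hDdef
      have hdeg3 : ∀ z ∈ S, 3 ≤ degIn T S z → T.dist z0 z ≤ D := by
        intro z hz h3
        exact hmaxQ z (Finset.mem_filter.mpr ⟨hz, h3⟩)
      -- at least two neighbours of wst at distance D+1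
      set N := S.filter (T.Adj wst) with hNdef
      set Nd := N.filter (fun c => T.dist z0 c + 1 = D) with hNddef
      have hNdcard : Nd.card ≤ 1 := by
        apply Finset.card_le_one.mpr
        intro a ha b hb
        have ha1 := Finset.mem_filter.mp (Finset.mem_filter.mp ha).1
        have hb1 := Finset.mem_filter.mp (Finset.mem_filter.mp hb).1
        exact unique_down_nbr hT ha1.2 hb1.2 (Finset.mem_filter.mp ha).2
          (Finset.mem_filter.mp hb).2
      have hNup : 2 ≤ (N \ Nd).card := by
        have hsub : Nd ⊆ N := Finset.filter_subset _ _
        rw [Finset.card_sdiff_of_subset hsub]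
        have : 3 ≤ N.card := hwstdeg
        omega
      obtain ⟨c1, hc1, c2, hc2, hc12⟩ := Finset.one_lt_card.mp (by omega : 1 < (N \ Nd).card)
      have hup : ∀ cc ∈ N \ Nd, cc ∈ S ∧ T.Adj wst cc ∧ T.dist z0 cc = D + 1 := by
        intro cc hcc
        have hccN := (Finset.mem_sdiff.mp hcc).1
        have hccNd := (Finset.mem_sdiff.mp hcc).2
        have hccS := (Finset.mem_filter.mp hccN).1
        have hccadj := (Finset.mem_filter.mp hccN).2
        refine ⟨hccS, hccadj, ?_⟩
        rcases nbr_dist_cases hT (s0 := z0) hccadj with h1 | h1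
        · rw [hDdef]; exact h1
        · exact absurd (Finset.mem_filter.mpr ⟨hccN, by rw [hDdef]; exact h1⟩) hccNd
      obtain ⟨hc1S, hc1adj, hc1d⟩ := hup c1 hc1
      obtain ⟨hc2S, hc2adj, hc2d⟩ := hup c2 hc2
      -- descend from c1 and c2 to leaves
      have hdesc : ∀ cc, cc ∈ S → T.Adj wst cc → T.dist z0 cc = D + 1 →
          ∃ (v : V) (r : T.Walk v wst), BareW T S r ∧
            (r.reverse.getVert 1 = cc) ∧ T.dist v wst = r.length := by
        intro cc hccS hccadj hccd
        obtain ⟨v, q, hq1, hq2, hq3, hq4, hq5, hq6⟩ :=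
          descend hT hconv hz0S hdeg3 S.card cc wst hccS hwstS hccadj.symm
            (by omega) (by omega) (by omega)
        refine ⟨v, (SimpleGraph.Walk.cons hccadj q).reverse, ?_, ?_, ?_⟩
        · constructor
          · exact (SimpleGraph.Walk.IsPath.cons hq1 hq3).reverse
          · intro z hz
            rw [SimpleGraph.Walk.support_reverse, List.mem_reverse,
              SimpleGraph.Walk.support_cons, List.mem_cons] at hz
            rcases hz with rfl | hz
            · exact hwstS
            · exact hq2 z hz
          · rw [SimpleGraph.Walk.length_reverse, SimpleGraph.Walk.length_cons]; omega
          · exact hq4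
          · intro z hz hzv hzw
            rw [SimpleGraph.Walk.support_reverse, List.mem_reverse,
              SimpleGraph.Walk.support_cons, List.mem_cons] at hz
            rcases hz with rfl | hz
            · exact absurd rfl hzw
            · exact hq5 z hz hzv
        · rw [SimpleGraph.Walk.reverse_reverse]
          exact (SimpleGraph.Walk.getVert_cons_succ (n := 0) q hccadj).trans q.getVert_zero
        · rw [SimpleGraph.Walk.length_reverse, ← path_length hT _
            ((SimpleGraph.Walk.IsPath.cons hq1 hq3).reverse), SimpleGraph.Walk.length_reverse]
      obtain ⟨v1, r1, hr1B, hr1c, hr1d⟩ := hdesc c1 hc1S hc1adj hc1d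
      obtain ⟨v2, r2, hr2B, hr2c, hr2d⟩ := hdesc c2 hc2S hc2adj hc2d
      have hv1S : v1 ∈ S := hr1B.supp _ r1.start_mem_support
      have hv2S : v2 ∈ S := hr2B.supp _ r2.start_mem_support
      have hwstdeg2 : degIn T S wst ≠ 2 := by omega
      -- choice of a complete bare walk from each leaf
      have hbw : ∀ v : V, ∃ e : ((w : V) × T.Walk v w),
          v ∈ S → degIn T S v = 1 → (BareW T S e.2 ∧ degIn T S e.1 ≠ 2) := by
        intro v
        by_cases h : v ∈ S ∧ degIn T S v = 1
        · obtain ⟨w, q, hBq, hdq⟩ := exists_complete_from_leaf hT h.1 h.2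
          exact ⟨⟨w, q⟩, fun _ _ => ⟨hBq, hdq⟩⟩
        · exact ⟨⟨v, SimpleGraph.Walk.nil⟩, fun h1 h2 => absurd ⟨h1, h2⟩ h⟩
      choose F hF using hbw
      have hgF : ∀ v, v ∈ S → degIn T S v = 1 → (F v).2.length = T.dist v (F v).1 := by
        intro v hv hd
        exact path_length hT _ ((hF v hv hd).1).path
      have hFend : ∀ (v : V) (hv : v ∈ S) (hd : degIn T S v = 1) (w' : V) (r : T.Walk v w'),
          BareW T S r → degIn T S w' ≠ 2 → w' = (F v).1 ∧ (F v).2.length = r.length := by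
        intro v hv hd w' r hrB hrd
        have heq : w' = (F v).1 := bare_unique (hF v hv hd).1 (hF v hv hd).2 hrB hrd
        subst heq
        have := path_unique hT _ _ (hF v hv hd).1.path hrB.path
        exact ⟨rfl, by rw [this]⟩
      have hv1deg : degIn T S v1 = 1 := hr1B.degu
      have hv2deg : degIn T S v2 = 1 := hr2B.degu
      obtain ⟨hF1end, hF1len⟩ := hFend v1 hv1S hv1deg wst r1 hr1B hwstdeg2
      obtain ⟨hF2end, hF2len⟩ := hFend v2 hv2S hv2deg wst r2 hr2B hwstdeg2
      -- v1 ≠ v2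
      have hv12 : v1 ≠ v2 := by
        rintro rfl
        have := path_unique hT r1 r2 hr1B.path hr2B.path
        have h2 := congrArg SimpleGraph.Walk.reverse this
        rw [← hr1c, ← hr2c, h2] at hc12
        exact hc12 rfl
      -- the leaf with the longest bare walk
      set Lf := S.filter (fun v => degIn T S v = 1) with hLfdef
      obtain ⟨u, huLf, hgmax⟩ := Lf.exists_max_image (fun v => (F v).2.length)
        ⟨v1, Finset.mem_filter.mpr ⟨hv1S, hv1deg⟩⟩
      have huS : u ∈ S := (Finset.mem_filter.mp huLf).1
      have hudeg : degIn T S u = 1 := (Finset.mem_filter.mp huLf).2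
      have hkey : k ≤ 2 * (F u).2.length := by
        have ht : T.dist v1 v2 ≤ T.dist v1 wst + T.dist wst v2 := hT.1.dist_triangle
        have hs : k ≤ T.dist v1 v2 := hspread v1 hv1S v2 hv2S hv1deg hv2deg hv12
        have h1 : (F v1).2.length ≤ (F u).2.length :=
          hgmax v1 (Finset.mem_filter.mpr ⟨hv1S, hv1deg⟩)
        have h2 : (F v2).2.length ≤ (F u).2.length :=
          hgmax v2 (Finset.mem_filter.mpr ⟨hv2S, hv2deg⟩)
        have e1 : T.dist v1 wst = (F v1).2.length := by rw [hF1len, hr1d]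
        have e2 : T.dist wst v2 = (F v2).2.length := by
          rw [SimpleGraph.dist_comm, hF2len, hr2d]
        omega
      -- remove the bare branch of u
      have hBp : BareW T S (F u).2 := (hF u huS hudeg).1
      have hdwu2 : degIn T S (F u).1 ≠ 2 := (hF u huS hudeg).2
      have hwuS : (F u).1 ∈ S := hBp.supp _ (F u).2.end_mem_support
      obtain ⟨c, pB, hc, hpe⟩ := exists_concat (F u).2 hBp.len
      have hsuppP : (F u).2.support = pB.support ++ [(F u).1] := by
        rw [hpe, SimpleGraph.Walk.support_concat]
      have hpBpath : pB.IsPath := by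
        have hx := hBp.path
        rw [hpe, SimpleGraph.Walk.concat_eq_append] at hx
        exact hx.of_append_left
      have hnd : (pB.support ++ [(F u).1]).Nodup := hsuppP ▸ hBp.path.support_nodup
      have hwuB : (F u).1 ∉ pB.support := by
        have hdisj := (List.nodup_append'.mp hnd).2.2
        intro hmem; exact hdisj hmem (List.mem_singleton_self (F u).1)
      set B := pB.support.toFinset with hBdef
      have hBsubS : B ⊆ S := by
        intro z hz
        apply hBp.supp
        rw [hsuppP]
        exact List.mem_append_left _ (List.mem_toFinset.mp hz)
      have huB : u ∈ B := List.mem_toFinset.mpr pB.start_mem_support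
      have hclB : ∀ z ∈ B, ∀ y ∈ S, T.Adj z y → y ∈ B ∨ y = (F u).1 := by
        intro z hz y hy hadj
        have hzsupp : z ∈ (F u).2.support := by
          rw [hsuppP]; exact List.mem_append_left _ (List.mem_toFinset.mp hz)
        have hzwu : z ≠ (F u).1 := fun hh => hwuB (hh ▸ List.mem_toFinset.mp hz)
        have hmem := bare_closure hBp z hzsupp hzwu y hy hadj
        rw [hsuppP, List.mem_append, List.mem_singleton] at hmem
        rcases hmem with h | h
        · exact Or.inl (List.mem_toFinset.mpr h)
        · exact Or.inr h
      have hedge : ∀ z ∈ B, T.Adj (F u).1 z → z = c := by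
        intro z hz hadj
        have hzsupp : z ∈ pB.support := List.mem_toFinset.mp hz
        have hr : (pB.dropUntil z hzsupp).IsPath := hpBpath.dropUntil hzsupp
        have hwunot : (F u).1 ∉ (pB.dropUntil z hzsupp).support := fun hh =>
          hwuB (pB.support_dropUntil_subset hzsupp hh)
        have hr' : ((pB.dropUntil z hzsupp).concat hc).IsPath := isPath_concat _ hr hc hwunot
        have hsingle : (SimpleGraph.Walk.cons hadj.symm SimpleGraph.Walk.nil :
            T.Walk z (F u).1).IsPath := (SimpleGraph.Path.singleton hadj.symm).2
        have heq := path_unique hT _ _ hr' hsingle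
        have hlen := congrArg SimpleGraph.Walk.length heq
        rw [SimpleGraph.Walk.length_concat, SimpleGraph.Walk.length_cons,
          SimpleGraph.Walk.length_nil] at hlen
        exact SimpleGraph.Walk.eq_of_length_eq_zero
          (p := pB.dropUntil z hzsupp) (by omega)
      have hcfil : c ∈ S.filter (T.Adj (F u).1) :=
        Finset.mem_filter.mpr ⟨hBsubS (List.mem_toFinset.mpr pB.end_mem_support), hc.symm⟩
      have hdegwu3 : 3 ≤ degIn T S (F u).1 := by
        by_contra hlt
        push_neg at hlt
        have hd1 : 1 ≤ degIn T S (F u).1 := Finset.card_pos.mpr ⟨c, hcfil⟩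
        have hdegwu1 : degIn T S (F u).1 = 1 := by omega
        have hclosed : ∀ a ∈ (F u).2.support.toFinset, ∀ b ∈ S, T.Adj a b →
            b ∈ (F u).2.support.toFinset := by
          intro a ha b hb hadj
          rcases eq_or_ne a (F u).1 with rfl | haw
          · have hbc := deg1_unique_nbr hdegwu1 (hBsubS (List.mem_toFinset.mpr
              pB.end_mem_support)) hc.symm b hb hadj
            subst hbc
            apply List.mem_toFinset.mpr
            rw [hsuppP]; exact List.mem_append_left _ pB.end_mem_support
          · exact List.mem_toFinset.mpr
              (bare_closure hBp a (List.mem_toFinset.mp ha) haw b hb hadj)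
        have hwstsupp : wst ∈ (F u).2.support := by
          obtain ⟨q, hq, -⟩ := hT.1.exists_path_of_dist u wst
          exact List.mem_toFinset.mp (walk_confined hclosed q
            (List.mem_toFinset.mpr (F u).2.start_mem_support) (hconv u huS wst hwstS q hq))
        have hwstu : wst ≠ u := by intro hh; rw [hh] at hwstdeg; omega
        have hwstwu : wst ≠ (F u).1 := by intro hh; rw [hh] at hwstdeg; omega
        have := hBp.internal wst hwstsupp hwstu hwstwu
        omega
      set S' := S \ B with hS'def
      have hS'subS : S' ⊆ S := Finset.sdiff_subset
      have herasesub : (S.filter (T.Adj (F u).1)).erase c ⊆ S'.filter (T.Adj (F u).1) := by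
        intro y hy
        have hyc := Finset.ne_of_mem_erase hy
        have hyfil := Finset.mem_of_mem_erase hy
        have hyS := (Finset.mem_filter.mp hyfil).1
        have hyadj := (Finset.mem_filter.mp hyfil).2
        have hynB : y ∉ B := fun hh => hyc (hedge y hh hyadj)
        exact Finset.mem_filter.mpr ⟨Finset.mem_sdiff.mpr ⟨hyS, hynB⟩, hyadj⟩
      have hdegS'wu : 2 ≤ degIn T S' (F u).1 := by
        have h1 : ((S.filter (T.Adj (F u).1)).erase c).card ≤ (S'.filter (T.Adj (F u).1)).card :=
          Finset.card_le_card herasesub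
        rw [Finset.card_erase_of_mem hcfil] at h1
        have h2 : (S.filter (T.Adj (F u).1)).card - 1 ≤ degIn T S' (F u).1 := h1
        have h3 : 3 ≤ (S.filter (T.Adj (F u).1)).card := hdegwu3
        omega
      have hS'2 : 2 ≤ S'.card := by
        have h1 := Finset.card_le_card (Finset.filter_subset (T.Adj (F u).1) S')
        have h2 : 2 ≤ (S'.filter (T.Adj (F u).1)).card := hdegS'wu
        omega
      have hconv' : TConvex T S' := by
        intro x hx y hy r hr z hz
        have hxS := hS'subS hx
        have hyS := hS'subS hy
        have hrS : ∀ v ∈ r.support, v ∈ S := hconv x hxS y hyS r hr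
        refine Finset.mem_sdiff.mpr ⟨hrS z hz, ?_⟩
        intro hzB
        have hxB : x ∉ B := (Finset.mem_sdiff.mp hx).2
        have hyB : y ∉ B := (Finset.mem_sdiff.mp hy).2
        have h1 : (F u).1 ∈ (r.takeUntil z hz).reverse.support.tail := by
          apply walk_exit hclB _ hzB hxB
          intro v hv
          rw [SimpleGraph.Walk.support_reverse, List.mem_reverse] at hv
          exact hrS v (r.support_takeUntil_subset hz hv)
        have h1' : (F u).1 ∈ (r.takeUntil z hz).support := by
          have h1m := List.mem_of_mem_tail h1
          rwa [SimpleGraph.Walk.support_reverse, List.mem_reverse] at h1m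
        have h2 : (F u).1 ∈ (r.dropUntil z hz).support.tail := by
          apply walk_exit hclB _ hzB hyB
          intro v hv
          exact hrS v (r.support_dropUntil_subset hz hv)
        have hsupp2 : r.support =
            (r.takeUntil z hz).support ++ (r.dropUntil z hz).support.tail := by
          conv_lhs => rw [← r.take_spec hz]
          rw [SimpleGraph.Walk.support_append]
        have hndr := hr.support_nodup
        rw [hsupp2, List.nodup_append'] at hndr
        exact hndr.2.2 h1' h2
      have hpres : ∀ x ∈ S', x ≠ (F u).1 → degIn T S' x = degIn T S x := by
        intro x hx hxwu
        have hfe : S'.filter (T.Adj x) = S.filter (T.Adj x) := by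
          apply Finset.Subset.antisymm
          · exact Finset.filter_subset_filter _ hS'subS
          · intro y hy
            have hyS := (Finset.mem_filter.mp hy).1
            have hyadj := (Finset.mem_filter.mp hy).2
            have hynB : y ∉ B := by
              intro hyB
              rcases hclB y hyB x (hS'subS hx) hyadj.symm with h | h
              · exact (Finset.mem_sdiff.mp hx).2 h
              · exact hxwu h
            exact Finset.mem_filter.mpr ⟨Finset.mem_sdiff.mpr ⟨hyS, hynB⟩, hyadj⟩
        rw [degIn, degIn, hfe]
      have hspread' : ∀ x ∈ S', ∀ y ∈ S', degIn T S' x = 1 → degIn T S' y = 1 → x ≠ y →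
          k ≤ T.dist x y := by
        intro x hx y hy hdx hdy hxy
        have hxwu : x ≠ (F u).1 := by rintro rfl; omega
        have hywu : y ≠ (F u).1 := by rintro rfl; omega
        exact hspread x (hS'subS hx) y (hS'subS hy)
          (by rw [← hpres x hx hxwu]; exact hdx)
          (by rw [← hpres y hy hywu]; exact hdy) hxy
      have hcardlt : S'.card < S.card :=
        Finset.card_lt_card ((Finset.ssubset_iff_of_subset hS'subS).mpr
          ⟨u, huS, fun hh => (Finset.mem_sdiff.mp hh).2 huB⟩)
      obtain ⟨L', hL1, hL2, hL3, hL4, hL5⟩ := ih S' (by omega) hS'2 hconv' hspread'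
      refine ⟨⟨u, c, pB⟩ :: L', ?_, ?_, ?_, ?_, ?_⟩
      · intro e he
        rcases List.mem_cons.mp he with rfl | he
        · exact hpBpath
        · exact hL1 e he
      · intro e he
        rcases List.mem_cons.mp he with rfl | he
        · show k ≤ 2 * pB.support.length
          have hlenp : (F u).2.length = pB.length + 1 := by
            rw [hpe, SimpleGraph.Walk.length_concat]
          have hsl : pB.support.length = pB.length + 1 := pB.length_support
          omega
        · exact hL2 e he
      · intro v hv
        by_cases hvB : v ∈ B
        · exact ⟨⟨u, c, pB⟩, List.mem_cons_self, List.mem_toFinset.mp hvB⟩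
        · obtain ⟨e, he, hve⟩ := hL3 v (Finset.mem_sdiff.mpr ⟨hv, hvB⟩)
          exact ⟨e, List.mem_cons_of_mem _ he, hve⟩
      · intro e he v hv
        rcases List.mem_cons.mp he with rfl | he
        · exact hBsubS (List.mem_toFinset.mpr hv)
        · exact hS'subS (hL4 e he v hv)
      · rw [List.pairwise_cons]
        refine ⟨?_, hL5⟩
        intro f hf v hvB hvf
        have hvS' := hL4 f hf v hvf
        exact (Finset.mem_sdiff.mp hvS').2 (List.mem_toFinset.mpr hvB)
    · -- path case : S is a single path
      push_neg at hbr
      obtain ⟨u, huS, hdegu⟩ := exists_leaf hT hconv hS2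
      obtain ⟨w, p, hB, hdw⟩ := exists_complete_from_leaf hT huS hdegu
      have hwS : w ∈ S := hB.supp _ p.end_mem_support
      obtain ⟨c, q0, hc, hpe⟩ := exists_concat p hB.len
      have hcsupp : c ∈ p.support := by
        rw [hpe, SimpleGraph.Walk.support_concat]
        exact List.mem_append.mpr (Or.inl q0.end_mem_support)
      have hcS : c ∈ S := hB.supp _ hcsupp
      have hdegw1 : 1 ≤ degIn T S w :=
        Finset.card_pos.mpr ⟨c, Finset.mem_filter.mpr ⟨hcS, hc.symm⟩⟩
      have hdegw : degIn T S w = 1 := by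
        have := hbr w hwS; omega
      have hwu : u ≠ w := Ne.symm (bare_end_ne_start hB)
      have hk : k ≤ T.dist u w := hspread u huS w hwS hdegu hdegw hwu
      -- support of p is all of S
      have hclosed : ∀ a ∈ p.support.toFinset, ∀ b ∈ S, T.Adj a b → b ∈ p.support.toFinset := by
        intro a ha b hb hadj
        rcases eq_or_ne a w with rfl | haw
        · have := deg1_unique_nbr hdegw hcS hc.symm b hb hadj
          exact this ▸ List.mem_toFinset.mpr hcsupp
        · exact List.mem_toFinset.mpr
            (bare_closure hB a (List.mem_toFinset.mp ha) haw b hb hadj)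
      have hall : ∀ z ∈ S, z ∈ p.support := by
        intro z hz
        obtain ⟨q, hq, -⟩ := hT.1.exists_path_of_dist u z
        have := walk_confined hclosed q (List.mem_toFinset.mpr p.start_mem_support)
          (hconv u huS z hz q hq)
        exact List.mem_toFinset.mp this
      refine ⟨[⟨u, w, p⟩], ?_, ?_, ?_, ?_, List.pairwise_singleton _ _⟩
      · intro e he; rw [List.mem_singleton] at he; subst he; exact hB.path
      · intro e he; rw [List.mem_singleton] at he; subst he
        have hlen : p.length = T.dist u w := path_length hT p hB.path
        have : p.support.length = p.length + 1 := p.length_support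
        simp only []
        omega
      · intro v hv; exact ⟨⟨u, w, p⟩, List.mem_singleton_self _, hall v hv⟩
      · intro e he; rw [List.mem_singleton] at he; subst he; exact hB.supp

end Prelim

/-- A leaf of a graph is a vertex of degree 1. -/
def IsLeaf {V : Type*} (G : SimpleGraph V) (v : V) : Prop :=
  (G.neighborSet v).ncard = 1

theorem tree_spread_path_partition {V : Type*} [Fintype V] (T : SimpleGraph V)
    (hT : T.IsTree) (hcard : 2 ≤ Fintype.card V) (k : ℕ)
    (hspread : ∀ x y : V, IsLeaf T x → IsLeaf T y → x ≠ y → k ≤ T.dist x y) :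
    ∃ (m : ℕ) (a b : Fin m → V) (P : ∀ i, T.Walk (a i) (b i)),
      (∀ i, (P i).IsPath) ∧ (∀ v : V, ∃! i, v ∈ (P i).support) ∧
      ∀ i, k ≤ 2 * (P i).support.length := by
  classical
  have hconv : TConvex T Finset.univ := fun x _ y _ p _ z _ => Finset.mem_univ z
  have hcard' : 2 ≤ (Finset.univ : Finset V).card := by rw [Finset.card_univ]; exact hcard
  have hleaf : ∀ x : V, degIn T Finset.univ x = 1 ↔ IsLeaf T x := by
    intro x
    rw [IsLeaf, Set.ncard_eq_toFinset_card']
    have he : (T.neighborSet x).toFinset = Finset.univ.filter (T.Adj x) := by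
      ext y
      simp [SimpleGraph.mem_neighborSet]
    rw [degIn, ← he]
  have hspread' : ∀ x ∈ (Finset.univ : Finset V), ∀ y ∈ (Finset.univ : Finset V),
      degIn T Finset.univ x = 1 → degIn T Finset.univ y = 1 → x ≠ y → k ≤ T.dist x y := by
    intro x _ y _ hx hy hxy
    exact hspread x y ((hleaf x).mp hx) ((hleaf y).mp hy) hxy
  obtain ⟨L, hL1, hL2, hL3, hL4, hL5⟩ :=
    main_partition hT k (Finset.univ : Finset V).card Finset.univ le_rfl hcard' hconv hspread'
  refine ⟨L.length, fun i => (L.get i).1, fun i => (L.get i).2.1, fun i => (L.get i).2.2,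
    ?_, ?_, ?_⟩
  · intro i
    exact hL1 (L.get i) (List.mem_iff_get.mpr ⟨i, rfl⟩)
  · intro v
    obtain ⟨e, heL, hve⟩ := hL3 v (Finset.mem_univ v)
    obtain ⟨i, hi⟩ := List.mem_iff_get.mp heL
    refine ⟨i, ?_, ?_⟩
    · show v ∈ (L.get i).2.2.support
      rw [hi]; exact hve
    · intro j hj
      have hvi : v ∈ (L.get i).2.2.support := by rw [hi]; exact hve
      by_contra hne
      have hpw := List.pairwise_iff_get.mp hL5
      rcases Nat.lt_trichotomy j.val i.val with h | h | h
      · exact hpw j i (by exact h) v hj hvi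
      · exact hne (Fin.ext h)
      · exact hpw i j (by exact h) v hvi hj
  · intro i
    exact hL2 (L.get i) (List.mem_iff_get.mpr ⟨i, rfl⟩)
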